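/- For every integer n ≥ 0, the modified Hankel determinant satisfies D̃_n = (Δ_{n+1}/(pq^{n+1};q)_∞) · D_n, where D̃_n = det((s̃_{i+j})_{0 ≤ i,j ≤ n}) and D_n = det((s_{i+j})_{0 ≤ i,j ≤ n}). -/

import Mathlib

/-- Finite q-shifted factorial `(z;q)_n`. -/
noncomputable def qp (z q : ℝ) (n : ℕ) : ℝ := ∏ k ∈ Finset.range n, (1 - z * q ^ k)

/-- Infinite q-shifted factorial `(z;q)_∞`. -/
noncomputable def qpInf (z q : ℝ) : ℝ := ∏' k : ℕ, (1 - z * q ^ k)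

/-- `Δ_n = (pq^n;q)_∞ − (q^n;q)_∞`. -/
noncomputable def Δ (p q : ℝ) (n : ℕ) : ℝ := qpInf (p * q ^ n) q - qpInf (q ^ n) q

/-- Generalized Stieltjes–Wigert moments `s_n = (p;q)_n q^{-(n+1)²/2}`. -/
noncomputable def sw (p q : ℝ) (n : ℕ) : ℝ := qp p q n * q ^ (-(((n : ℝ) + 1) ^ 2) / 2)

/-- Modified moments: `s̃_0 = q^{-1/2}(1 − (q;q)_∞/(pq;q)_∞)` and `s̃_n = s_n` for `n ≥ 1`. -/
noncomputable def swt (p q : ℝ) (n : ℕ) : ℝ :=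
  if n = 0 then q ^ (-(1 : ℝ) / 2) * (1 - qpInf q q / qpInf (p * q) q) else sw p q n

section Aux
open Finset

lemma qp_add (z q : ℝ) (a b : ℕ) : qp z q (a + b) = qp z q a * qp (z * q ^ a) q b := by
  unfold qp
  rw [Finset.prod_range_add]
  congr 1
  exact Finset.prod_congr rfl fun k _ => by rw [mul_assoc, ← pow_add]

lemma rpow_prod_sum {q : ℝ} (hq : 0 < q) {ι : Type*} (s : Finset ι) (f : ι → ℝ) :
    ∏ i ∈ s, q ^ (f i) = q ^ (∑ i ∈ s, f i) := by
  simp only [Real.rpow_def_of_pos hq]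
  rw [← Real.exp_sum, Finset.mul_sum]

lemma log_summable {z q : ℝ} (hz0 : 0 ≤ z) (hz1 : z < 1) (hq0 : 0 < q) (hq1 : q < 1) :
    Summable fun k : ℕ => Real.log (1 - z * q ^ k) := by
  have hpos : ∀ k : ℕ, 0 < 1 - z * q ^ k := by
    intro k
    have h1 : z * q ^ k ≤ z * 1 := by
      apply mul_le_mul_of_nonneg_left _ hz0
      exact pow_le_one₀ hq0.le hq1.le
    nlinarith
  rw [← summable_neg_iff]
  apply Summable.of_nonneg_of_le (fun k => ?_) (fun k => ?_)
    (((summable_geometric_of_lt_one hq0.le hq1).mul_left (z / (1 - z))))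
  · have : 1 - z * q ^ k ≤ 1 := by nlinarith [pow_nonneg hq0.le k, hz0]
    simpa using Real.log_nonpos (by linarith [hpos k]) this
  · have h1 : -Real.log (1 - z * q ^ k) = Real.log (1 - z * q ^ k)⁻¹ := (Real.log_inv _).symm
    rw [h1]
    have h2 : Real.log (1 - z * q ^ k)⁻¹ ≤ (1 - z * q ^ k)⁻¹ - 1 :=
      Real.log_le_sub_one_of_pos (inv_pos.mpr (hpos k))
    have h3 : (1 - z * q ^ k)⁻¹ - 1 = z * q ^ k / (1 - z * q ^ k) := by
      rw [inv_eq_one_div, div_sub' (hpos k).ne']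
      ring_nf
    have hzq : z * q ^ k ≤ z := by
      calc z * q ^ k ≤ z * 1 := mul_le_mul_of_nonneg_left (pow_le_one₀ hq0.le hq1.le) hz0
      _ = z := mul_one z
    have h4 : z * q ^ k / (1 - z * q ^ k) ≤ z / (1 - z) * q ^ k := by
      rw [div_mul_eq_mul_div, div_le_div_iff₀ (hpos k) (by linarith)]
      nlinarith [mul_nonneg (mul_nonneg hz0 (pow_nonneg hq0.le k)) (sub_nonneg.mpr hzq)]
    linarith

lemma qpInf_eq_exp {z q : ℝ} (hz0 : 0 ≤ z) (hz1 : z < 1) (hq0 : 0 < q) (hq1 : q < 1) :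
    qpInf z q = Real.exp (∑' k : ℕ, Real.log (1 - z * q ^ k)) := by
  have hpos : ∀ k : ℕ, 0 < 1 - z * q ^ k := by
    intro k
    have h1 : z * q ^ k ≤ z * 1 :=
      mul_le_mul_of_nonneg_left (pow_le_one₀ hq0.le hq1.le) hz0
    nlinarith
  have hs := log_summable hz0 hz1 hq0 hq1
  have hp : HasProd (fun k : ℕ => 1 - z * q ^ k)
      (Real.exp (∑' k : ℕ, Real.log (1 - z * q ^ k))) := by
    have h := hs.hasSum.rexp
    have he : (Real.exp ∘ fun k : ℕ => Real.log (1 - z * q ^ k))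
        = fun k : ℕ => 1 - z * q ^ k := funext fun k => Real.exp_log (hpos k)
    rwa [he] at h
  exact hp.tprod_eq

lemma qpInf_pos {z q : ℝ} (hz0 : 0 ≤ z) (hz1 : z < 1) (hq0 : 0 < q) (hq1 : q < 1) :
    0 < qpInf z q := by
  rw [qpInf_eq_exp hz0 hz1 hq0 hq1]; exact Real.exp_pos _

lemma qpInf_split {z q : ℝ} (hz0 : 0 ≤ z) (hz1 : z < 1) (hq0 : 0 < q) (hq1 : q < 1) (m : ℕ) :
    qpInf z q = qp z q m * qpInf (z * q ^ m) q := by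
  have hzm0 : 0 ≤ z * q ^ m := mul_nonneg hz0 (pow_nonneg hq0.le m)
  have hzm1 : z * q ^ m < 1 :=
    lt_of_le_of_lt (by nlinarith [pow_le_one₀ hq0.le hq1.le (n := m)]) hz1
  have hpos : ∀ k : ℕ, 0 < 1 - z * q ^ k := by
    intro k
    have h1 : z * q ^ k ≤ z * 1 :=
      mul_le_mul_of_nonneg_left (pow_le_one₀ hq0.le hq1.le) hz0
    nlinarith
  rw [qpInf_eq_exp hz0 hz1 hq0 hq1, qpInf_eq_exp hzm0 hzm1 hq0 hq1]
  rw [← (log_summable hz0 hz1 hq0 hq1).sum_add_tsum_nat_add m, Real.exp_add]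
  congr 1
  · rw [Real.exp_sum]
    exact Finset.prod_congr rfl fun k _ => Real.exp_log (hpos k)
  · congr 1
    exact tsum_congr fun k => by rw [mul_assoc, ← pow_add, add_comm k m]

lemma prod_pairs (m : ℕ) (f : ℕ → ℕ → ℝ) :
    ∏ i : Fin m, ∏ j ∈ Finset.Ioi i, f (i : ℕ) (j : ℕ)
      = ∏ j ∈ Finset.range m, ∏ i ∈ Finset.range j, f i j := by
  induction m generalizing f with
  | zero => simp
  | succ m ih =>
    rw [Fin.prod_univ_succ]
    simp only [Fin.prod_Ioi_zero, Fin.prod_Ioi_succ, Fin.val_succ, Fin.val_zero]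
    rw [Fin.prod_univ_eq_prod_range (fun j => f 0 (j + 1)) m, ih (fun i j => f (i+1) (j+1))]
    rw [Finset.prod_range_succ' (fun j => ∏ i ∈ Finset.range j, f i j) m]
    simp only [Finset.range_zero, Finset.prod_empty, mul_one]
    rw [← Finset.prod_mul_distrib]
    · congr 1
      funext j
      rw [Finset.prod_range_succ' (fun i => f i (j+1)) j, mul_comm]
  
lemma vdm_range (v : ℕ → ℝ) (m : ℕ) :
    (Matrix.vandermonde fun i : Fin m => v (i : ℕ)).det
      = ∏ j ∈ Finset.range m, ∏ i ∈ Finset.range j, (v j - v i) := by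
  rw [Matrix.det_vandermonde]
  exact prod_pairs m fun i j => v j - v i

open Polynomial in
lemma hankel_det (p q : ℝ) (hq0 : 0 < q) (m a : ℕ) :
    (Matrix.of fun i j : Fin m => sw p q ((i : ℕ) + (j : ℕ) + a)).det
      = (∏ i ∈ Finset.range m, (qp p q (i + a) * q ^ (-(((i : ℝ) + (a : ℝ) + 1) ^ 2) / 2)))
        * ((∏ j ∈ Finset.range m, q ^ (-((j : ℝ) ^ 2 / 2 + ((a : ℝ) + 1) * (j : ℝ))))
          * ∏ j ∈ Finset.range m, ∏ i ∈ Finset.range j, ((q⁻¹) ^ j - (q⁻¹) ^ i)) := by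
  have hqne : q ≠ 0 := hq0.ne'
  set P : Fin m → ℝ[X] := fun j => ∏ k ∈ Finset.range (j : ℕ), (X - C (p * q ^ (a + k))) with hP
  have hentry : (Matrix.of fun i j : Fin m => sw p q ((i : ℕ) + (j : ℕ) + a))
      = Matrix.of fun i j : Fin m =>
          (qp p q ((i : ℕ) + a) * q ^ (-((((i : ℕ) : ℝ) + (a : ℝ) + 1) ^ 2) / 2)) *
          ((q ^ (-(((j : ℕ) : ℝ) ^ 2 / 2 + ((a : ℝ) + 1) * ((j : ℕ) : ℝ)))) *
            (P j).eval ((q⁻¹) ^ (i : ℕ))) := by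
    ext i j
    simp only [Matrix.of_apply, hP, eval_prod, eval_sub, eval_X, eval_C]
    -- eval = ((q⁻¹)^i)^j * qp (p*q^(i+a)) q j
    have heval : ∏ k ∈ Finset.range (j : ℕ), ((q⁻¹) ^ (i : ℕ) - p * q ^ (a + k))
        = ((q⁻¹) ^ (i : ℕ)) ^ (j : ℕ) * qp (p * q ^ ((i : ℕ) + a)) q (j : ℕ) := by
      unfold qp
      have hc : (((q⁻¹) ^ (i : ℕ) : ℝ)) ^ (j : ℕ)
          = ∏ _k ∈ Finset.range (j : ℕ), ((q⁻¹) ^ (i : ℕ) : ℝ) := by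
        rw [Finset.prod_const, Finset.card_range]
      rw [hc, ← Finset.prod_mul_distrib]
      refine Finset.prod_congr rfl fun k _ => ?_
      have hx : q ^ (i : ℕ) * q⁻¹ ^ (i : ℕ) = 1 := by rw [← mul_pow, mul_inv_cancel₀ hqne, one_pow]
      linear_combination (p * q ^ a * q ^ k) * hx
    rw [heval]
    have hqp : qp p q ((i : ℕ) + (j : ℕ) + a) = qp p q ((i : ℕ) + a) * qp (p * q ^ ((i : ℕ) + a)) q (j : ℕ) := by
      rw [add_right_comm, qp_add]
    rw [sw, hqp]
    have hpow : ((q⁻¹) ^ (i : ℕ) : ℝ) ^ (j : ℕ) = q ^ (-(((i : ℕ) : ℝ) * ((j : ℕ) : ℝ))) := by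
      rw [← pow_mul, inv_pow, ← Real.rpow_natCast q ((i : ℕ) * (j : ℕ)), ← Real.rpow_neg hq0.le]
      push_cast
      ring_nf
    rw [hpow]
    rw [show (-((((i : ℕ) + (j : ℕ) + a : ℕ) : ℝ) + 1) ^ 2 / 2)
        = (-((((i : ℕ) : ℝ) + (a : ℝ) + 1) ^ 2) / 2)
          + ((-(((j : ℕ) : ℝ) ^ 2 / 2 + ((a : ℝ) + 1) * ((j : ℕ) : ℝ)))
          + (-(((i : ℕ) : ℝ) * ((j : ℕ) : ℝ)))) by push_cast; ring]
    rw [Real.rpow_add hq0, Real.rpow_add hq0]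
    ring
  rw [hentry]
  rw [show (Matrix.of fun i j : Fin m =>
        (qp p q ((i : ℕ) + a) * q ^ (-((((i : ℕ) : ℝ) + (a : ℝ) + 1) ^ 2) / 2)) *
        ((q ^ (-(((j : ℕ) : ℝ) ^ 2 / 2 + ((a : ℝ) + 1) * ((j : ℕ) : ℝ)))) *
          (P j).eval ((q⁻¹) ^ (i : ℕ))))
      = Matrix.of fun i j : Fin m =>
          (fun i : Fin m => qp p q ((i : ℕ) + a) * q ^ (-((((i : ℕ) : ℝ) + (a : ℝ) + 1) ^ 2) / 2)) i *
          (Matrix.of fun i j : Fin m =>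
            (fun j : Fin m => q ^ (-(((j : ℕ) : ℝ) ^ 2 / 2 + ((a : ℝ) + 1) * ((j : ℕ) : ℝ)))) j *
            (Matrix.of fun i j : Fin m => (P j).eval ((q⁻¹) ^ (i : ℕ))) i j) i j from rfl]
  rw [Matrix.det_mul_column, Matrix.det_mul_row]
  have hdeg : ∀ j : Fin m, (P j).natDegree = (j : ℕ) := by
    intro j
    rw [hP, Polynomial.natDegree_prod _ _ fun k _ => X_sub_C_ne_zero _]
    rw [Finset.sum_congr rfl fun k _ => Polynomial.natDegree_X_sub_C (p * q ^ (a + k))]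
    simp
  have hmon : ∀ j : Fin m, (P j).Monic := fun j =>
    monic_prod_of_monic _ _ fun k _ => monic_X_sub_C _
  have hvdm := Matrix.det_eval_matrixOfPolynomials_eq_det_vandermonde
    (fun i : Fin m => (q⁻¹) ^ (i : ℕ)) P hdeg hmon
  rw [← hvdm, vdm_range (fun i => (q⁻¹) ^ i) m]
  rw [Fin.prod_univ_eq_prod_range
      (fun i : ℕ => qp p q (i + a) * q ^ (-(((i : ℝ) + (a : ℝ) + 1) ^ 2) / 2)) m,
    Fin.prod_univ_eq_prod_range
      (fun j : ℕ => q ^ (-((j : ℝ) ^ 2 / 2 + ((a : ℝ) + 1) * (j : ℝ)))) m]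

lemma qp_one (z q : ℝ) : qp z q 1 = 1 - z := by simp [qp]

lemma qp_succ_shift (p q : ℝ) (i : ℕ) : qp p q (i + 1) = (1 - p) * qp (p * q) q i := by
  have := qp_add p q 1 i
  rw [show 1 + i = i + 1 from add_comm 1 i] at this
  rw [this, qp_one, pow_one]

lemma qp_telescope (p q : ℝ) (n : ℕ) :
    ∏ i ∈ Finset.range n, qp p q (i + 2)
      = qp (p * q) q n * ∏ i ∈ Finset.range (n + 1), qp p q i := by
  have h0 : qp p q 0 = 1 := by simp [qp]
  have hg0 : qp (p * q) q 0 = 1 := by simp [qp]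
  rw [Finset.prod_range_succ' (fun i => qp p q i) n, h0, mul_one]
  have h1 : ∀ i, qp p q (i + 2) = (1 - p) * qp (p * q) q (i + 1) := by
    intro i
    rw [show i + 2 = (i + 1) + 1 from rfl, qp_succ_shift]
  have h2 : ∀ i, qp p q (i + 1) = (1 - p) * qp (p * q) q i := fun i => qp_succ_shift p q i
  simp only [h1, h2]
  rw [Finset.prod_mul_distrib, Finset.prod_mul_distrib]
  have h3 : ∏ i ∈ Finset.range n, qp (p * q) q (i + 1)
      = qp (p * q) q n * ∏ i ∈ Finset.range n, qp (p * q) q i := by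
    have := Finset.prod_range_succ' (fun i => qp (p * q) q i) n
    rw [hg0, mul_one] at this
    rw [← this, Finset.prod_range_succ]
    ring
  rw [h3]
  ring

lemma expsum (n : ℕ) :
    ∑ i ∈ Finset.range n, ((-(((i : ℝ) + 2 + 1) ^ 2) / 2) + (-((i : ℝ) ^ 2 / 2 + (2 + 1) * (i : ℝ))))
      = 1 / 2 + (∑ i ∈ Finset.range (n + 1),
          ((-(((i : ℝ) + 0 + 1) ^ 2) / 2) + (-((i : ℝ) ^ 2 / 2 + (0 + 1) * (i : ℝ)))))
        + (-((n : ℝ) * (n : ℝ))) := by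
  induction n with
  | zero => simp; norm_num
  | succ n ih =>
    rw [Finset.sum_range_succ]
    rw [Finset.sum_range_succ (n := n + 1)]
    push_cast
    push_cast at ih
    linarith

lemma vdm_step {q : ℝ} (hq0 : 0 < q) (n : ℕ) :
    ∏ j ∈ Finset.range (n + 1), ∏ i ∈ Finset.range j, ((q⁻¹) ^ j - (q⁻¹) ^ i)
      = (∏ j ∈ Finset.range n, ∏ i ∈ Finset.range j, ((q⁻¹) ^ j - (q⁻¹) ^ i))
        * (((q⁻¹) ^ n) ^ n * qp q q n) := by
  rw [Finset.prod_range_succ]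
  congr 1
  have h1 : ∀ i ∈ Finset.range n, ((q⁻¹ : ℝ) ^ n - (q⁻¹) ^ i)
      = (q⁻¹) ^ n * (1 - q ^ (n - i)) := by
    intro i hi
    rw [Finset.mem_range] at hi
    rw [pow_sub₀ q hq0.ne' hi.le]
    have hx : q⁻¹ ^ n * q ^ n = 1 := by rw [← mul_pow, inv_mul_cancel₀ hq0.ne', one_pow]
    linear_combination (q⁻¹ ^ i) * hx
  rw [Finset.prod_congr rfl h1, Finset.prod_mul_distrib, Finset.prod_const, Finset.card_range]
  congr 1
  have h2 : qp q q n = ∏ i ∈ Finset.range n, (1 - q ^ (i + 1)) := by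
    unfold qp
    exact Finset.prod_congr rfl fun k _ => by rw [← pow_succ']
  rw [h2, ← Finset.prod_range_reflect (fun i => 1 - q ^ (i + 1)) n]
  refine Finset.prod_congr rfl fun i hi => ?_
  rw [Finset.mem_range] at hi
  congr 2
  omega

lemma key_identity (p q : ℝ) (hq0 : 0 < q) (n : ℕ) :
    qp q q n * (Matrix.of fun i j : Fin n => sw p q ((i : ℕ) + (j : ℕ) + 2)).det
      = q ^ ((1 : ℝ) / 2) * qp (p * q) q n
        * (Matrix.of fun i j : Fin (n + 1) => sw p q ((i : ℕ) + (j : ℕ) + 0)).det := by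
  rw [hankel_det p q hq0 n 2, hankel_det p q hq0 (n + 1) 0]
  rw [vdm_step hq0 n]
  -- separate qp and rpow parts
  rw [Finset.prod_mul_distrib, Finset.prod_mul_distrib]
  rw [rpow_prod_sum hq0, rpow_prod_sum hq0, rpow_prod_sum hq0, rpow_prod_sum hq0]
  rw [qp_telescope p q n]
  have hqn : (((q⁻¹ : ℝ) ^ n) ^ n) = q ^ (-((n : ℝ) * (n : ℝ))) := by
    rw [← pow_mul, inv_pow, ← Real.rpow_natCast q (n * n), ← Real.rpow_neg hq0.le]
    push_cast; ring_nf
  rw [hqn]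
  simp only [Nat.add_zero]
  have hcomb : q ^ (∑ i ∈ Finset.range n, (-(((i : ℕ) : ℝ) + ((2 : ℕ) : ℝ) + 1) ^ 2 / 2))
        * q ^ (∑ i ∈ Finset.range n,
            (-(((i : ℕ) : ℝ) ^ 2 / 2 + (((2 : ℕ) : ℝ) + 1) * ((i : ℕ) : ℝ))))
      = q ^ ((1 : ℝ) / 2)
        * (q ^ (∑ i ∈ Finset.range (n + 1), (-(((i : ℕ) : ℝ) + ((0 : ℕ) : ℝ) + 1) ^ 2 / 2))
        * (q ^ (∑ i ∈ Finset.range (n + 1),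
            (-(((i : ℕ) : ℝ) ^ 2 / 2 + (((0 : ℕ) : ℝ) + 1) * ((i : ℕ) : ℝ))))
        * q ^ (-((n : ℝ) * (n : ℝ))))) := by
    rw [← Real.rpow_add hq0, ← Real.rpow_add hq0, ← Real.rpow_add hq0, ← Real.rpow_add hq0]
    congr 1
    push_cast
    clear hqn
    induction n with
    | zero => norm_num
    | succ m ih =>
      rw [Finset.sum_range_succ, Finset.sum_range_succ,
        Finset.sum_range_succ (n := m + 1), Finset.sum_range_succ (n := m + 1)]
      push_cast
      push_cast at ih
      linarith
  linear_combination (qp q q n * qp (p * q) q n * (∏ i ∈ Finset.range (n + 1), qp p q i)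
    * (∏ j ∈ Finset.range n, ∏ i ∈ Finset.range j, ((q⁻¹) ^ j - (q⁻¹) ^ i))) * hcomb

lemma cofactor (p q : ℝ) (n : ℕ) :
    (Matrix.of fun i j : Fin (n + 1) => swt p q ((i : ℕ) + (j : ℕ))).det
      = (Matrix.of fun i j : Fin (n + 1) => sw p q ((i : ℕ) + (j : ℕ))).det
        + (swt p q 0 - sw p q 0)
          * (Matrix.of fun i j : Fin n => sw p q ((i : ℕ) + (j : ℕ) + 2)).det := by
  set M : Matrix (Fin (n + 1)) (Fin (n + 1)) ℝ :=
    Matrix.of fun i j : Fin (n + 1) => sw p q ((i : ℕ) + (j : ℕ)) with hM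
  set δ : ℝ := swt p q 0 - sw p q 0 with hδ
  have hMt : (Matrix.of fun i j : Fin (n + 1) => swt p q ((i : ℕ) + (j : ℕ)))
      = M.updateRow 0 (M 0 + Pi.single 0 δ) := by
    ext i j
    by_cases hi : i = 0
    · subst hi
      rw [Matrix.updateRow_self]
      by_cases hj : j = 0
      · subst hj
        simp [hδ, Pi.single_apply, hM]
      · have hjv : (j : ℕ) ≠ 0 := fun h => hj (Fin.ext h)
        simp [Pi.single_apply, hj, hM, swt, hjv]
    · rw [Matrix.updateRow_ne hi]
      have hiv : (i : ℕ) ≠ 0 := fun h => hi (Fin.ext h)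
      simp [hM, swt, Nat.add_eq_zero, hiv, hi]
  rw [hMt, Matrix.det_updateRow_add, Matrix.updateRow_eq_self]
  congr 1
  rw [Matrix.det_succ_row_zero]
  rw [Finset.sum_eq_single (0 : Fin (n + 1))]
  · rw [Matrix.updateRow_self]
    simp only [Pi.single_eq_same, Fin.val_zero, pow_zero, one_mul]
    have hsub : ((M.updateRow 0 (Pi.single 0 δ)).submatrix Fin.succ (Fin.succAbove 0))
        = Matrix.of fun i j : Fin n => sw p q ((i : ℕ) + (j : ℕ) + 2) := by
      ext i j
      rw [Matrix.submatrix_apply, Matrix.updateRow_ne (Fin.succ_ne_zero i),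
        Fin.succAbove_zero]
      show sw p q ((i : ℕ) + 1 + ((j : ℕ) + 1)) = sw p q ((i : ℕ) + (j : ℕ) + 2)
      congr 1
      omega
    rw [hsub]
  · intro j _ hj
    rw [Matrix.updateRow_self]
    simp [Pi.single_apply, hj]
  · intro h
    exact absurd (Finset.mem_univ _) h

end Aux

theorem stmt_8 (p q : ℝ) (hp0 : 0 ≤ p) (hp1 : p < 1) (hq0 : 0 < q) (hq1 : q < 1) (n : ℕ) :
    (Matrix.of fun i j : Fin (n + 1) => swt p q ((i : ℕ) + (j : ℕ))).det
      = Δ p q (n + 1) / qpInf (p * q ^ (n + 1)) q *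
          (Matrix.of fun i j : Fin (n + 1) => sw p q ((i : ℕ) + (j : ℕ))).det := by
  have hqle : (0 : ℝ) ≤ q := hq0.le
  have hpq0 : 0 ≤ p * q := mul_nonneg hp0 hqle
  have hpq1 : p * q < 1 := lt_of_le_of_lt (mul_le_of_le_one_right hp0 hq1.le) hp1
  have hqn1 : q ^ (n + 1) < 1 := pow_lt_one₀ hqle hq1 (Nat.succ_ne_zero n)
  have hpqn0 : 0 ≤ p * q ^ (n + 1) := mul_nonneg hp0 (pow_nonneg hqle _)
  have hpqn1 : p * q ^ (n + 1) < 1 :=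
    lt_of_le_of_lt (mul_le_of_le_one_right hp0 (pow_le_one₀ hqle hq1.le)) hp1
  have hq_split : qpInf q q = qp q q n * qpInf (q ^ (n + 1)) q := by
    rw [qpInf_split hqle hq1 hq0 hq1 n, ← pow_succ']
  have hpq_split : qpInf (p * q) q = qp (p * q) q n * qpInf (p * q ^ (n + 1)) q := by
    rw [qpInf_split hpq0 hpq1 hq0 hq1 n]
    congr 2
    rw [pow_succ']
    ring
  have hT : 0 < qpInf (p * q ^ (n + 1)) q := qpInf_pos hpqn0 hpqn1 hq0 hq1
  have ha : 0 < qp q q n := by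
    apply Finset.prod_pos
    intro k _
    have : q * q ^ k ≤ q * 1 := mul_le_mul_of_nonneg_left (pow_le_one₀ hqle hq1.le) hqle
    nlinarith
  have hb : 0 < qp (p * q) q n := by
    apply Finset.prod_pos
    intro k _
    have h1 : p * q * q ^ k ≤ p * q * 1 :=
      mul_le_mul_of_nonneg_left (pow_le_one₀ hqle hq1.le) hpq0
    nlinarith
  have hδ : swt p q 0 - sw p q 0
      = -(q ^ (-(1 : ℝ) / 2) * (qpInf q q / qpInf (p * q) q)) := by
    have h0 : sw p q 0 = q ^ (-(1 : ℝ) / 2) := by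
      rw [sw]
      norm_num [qp]
    rw [swt, if_pos rfl, h0]
    ring
  have KI := key_identity p q hq0 n
  simp only [Nat.add_zero] at KI
  have hhalf : q ^ (-(1 : ℝ) / 2) * q ^ ((1 : ℝ) / 2) = 1 := by
    rw [← Real.rpow_add hq0]
    norm_num
  rw [cofactor p q n, hδ, hq_split, hpq_split, Δ]
  set D := (Matrix.of fun i j : Fin (n + 1) => sw p q ((i : ℕ) + (j : ℕ))).det with hD
  set A := (Matrix.of fun i j : Fin n => sw p q ((i : ℕ) + (j : ℕ) + 2)).det with hA
  set T := qpInf (p * q ^ (n + 1)) q with hTdef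
  set S := qpInf (q ^ (n + 1)) q with hSdef
  field_simp
  have hhalf' : q ^ (-((1 : ℝ) / 2)) * q ^ ((1 : ℝ) / 2) = 1 := by
    rw [← Real.rpow_add hq0]
    norm_num
  linear_combination (-(q ^ (-((1 : ℝ) / 2)) * S)) * KI - (S * qp (p * q) q n * D) * hhalf'
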